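/- Theorem 5, part 1 (no overshooting of the true configuration). In the normal means model, for any sequence of true vectors β* = β*_n with |S_{β*}| = o(n), the variational approximation satisfies E_{β*} q^n({S : S ⊋ S*}) → 0 as n → ∞, where q^n({S : S ⊋ S*}) = Σ_{S strictly containing S*} Π_{i∈S} φ_i · Π_{i∉S} (1−φ_i) and S* = S_{β*}. -/

import Mathlib

open MeasureTheory ProbabilityTheory Real Filter Asymptotics
open scoped ENNReal NNReal Classical Topology

noncomputable section

namespace VB

/-- The configuration (support) of a mean vector. -/
def config {n : ℕ} (β : Fin n → ℝ) : Finset (Fin n) :=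
  Finset.univ.filter fun i => β i ≠ 0

/-- The logit function. -/
def logit (t : ℝ) : ℝ := Real.log (t / (1 - t))

/-- The prior inclusion probability `λ_n = n^{-(a+1)}`. -/
def lamn (a : ℝ) (n : ℕ) : ℝ := (n : ℝ) ^ (-(a + 1))

/-- The inclusion log-odds of the variational approximation:
`logit(φ_i) = logit(λ_n) - log z + (α/2) y_i²`, with `z = (1 + α/γ)^{1/2}`. -/
def logitPhi (α γ a : ℝ) (n : ℕ) (yi : ℝ) : ℝ :=
  logit (lamn a n) - Real.log (Real.sqrt (1 + α / γ)) + α / 2 * yi ^ 2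

/-- The inclusion probability `φ_i` of the variational approximation. -/
def phi (α γ a : ℝ) (n : ℕ) (yi : ℝ) : ℝ :=
  1 / (1 + Real.exp (-logitPhi α γ a n yi))

/-- The variational approximation `q^n = ⊗_i [φ_i N(y_i, (α+γ)⁻¹) + (1-φ_i) δ₀]`. -/
def qn (α γ a : ℝ) (n : ℕ) (y : Fin n → ℝ) : Measure (Fin n → ℝ) :=
  Measure.pi fun i =>
    ENNReal.ofReal (phi α γ a n (y i)) •
        gaussianReal (y i) (Real.toNNReal (α + γ)⁻¹) +
      ENNReal.ofReal (1 - phi α γ a n (y i)) • Measure.dirac 0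

/-- The induced variational distribution over configurations:
`q^n(S) = Π_{i∈S} φ_i · Π_{i∉S} (1-φ_i)`. -/
def qS (α γ a : ℝ) (n : ℕ) (y : Fin n → ℝ) (S : Finset (Fin n)) : ℝ :=
  (∏ i ∈ S, phi α γ a n (y i)) * ∏ i ∈ Sᶜ, (1 - phi α γ a n (y i))

/-- The sampling distribution: `y_i ~ N(β_i, 1)` independent. -/
def Pd {n : ℕ} (β : Fin n → ℝ) : Measure (Fin n → ℝ) :=
  Measure.pi fun i => gaussianReal (β i) 1

end VB

namespace VB

/-! ### Auxiliary lemmas -/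

lemma phi_pos (α γ a : ℝ) (n : ℕ) (x : ℝ) : 0 < phi α γ a n x := by
  unfold phi
  positivity

lemma phi_le_one (α γ a : ℝ) (n : ℕ) (x : ℝ) : phi α γ a n x ≤ 1 := by
  unfold phi
  rw [div_le_one (by positivity)]
  linarith [Real.exp_pos (-logitPhi α γ a n x)]

lemma phi_le_exp (α γ a : ℝ) (n : ℕ) (x : ℝ) :
    phi α γ a n x ≤ Real.exp (logitPhi α γ a n x) := by
  unfold phi
  rw [div_le_iff₀ (by positivity)]
  have h := Real.exp_pos (-logitPhi α γ a n x)
  have h2 : Real.exp (logitPhi α γ a n x) * Real.exp (-logitPhi α γ a n x) = 1 := by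
    rw [← Real.exp_add]; simp
  nlinarith [Real.exp_pos (logitPhi α γ a n x)]

lemma phi_le_bound {α γ a : ℝ} (hα : 0 < α) (hγ : 0 < γ) (ha : 0 < a) {n : ℕ}
    (hn : 2 ≤ n) (x : ℝ) :
    phi α γ a n x ≤ 2 * lamn a n * Real.exp (α / 2 * x ^ 2) := by
  have hn1 : (1 : ℝ) ≤ (n : ℝ) := by exact_mod_cast Nat.one_le_of_lt hn
  have hn2 : (2 : ℝ) ≤ (n : ℝ) := by exact_mod_cast hn
  have hn0 : (0 : ℝ) < (n : ℝ) := by linarith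
  have hlam_pos : 0 < lamn a n := Real.rpow_pos_of_pos hn0 _
  have hlam_half : lamn a n ≤ 1 / 2 := by
    have h1 : lamn a n ≤ (n : ℝ) ^ (-1 : ℝ) :=
      Real.rpow_le_rpow_of_exponent_le hn1 (by linarith)
    have h2 : (n : ℝ) ^ (-1 : ℝ) = ((n : ℝ))⁻¹ := Real.rpow_neg_one _
    have h3 : ((n : ℝ))⁻¹ ≤ 1 / 2 := by
      rw [inv_eq_one_div]
      apply div_le_div_of_nonneg_left (by norm_num) (by norm_num) hn2
    linarith [h1, h2 ▸ h1]
  have hz1 : (1 : ℝ) ≤ Real.sqrt (1 + α / γ) := by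
    rw [Real.one_le_sqrt]
    have : 0 < α / γ := div_pos hα hγ
    linarith
  have hz0 : (0 : ℝ) < Real.sqrt (1 + α / γ) := by linarith
  calc phi α γ a n x ≤ Real.exp (logitPhi α γ a n x) := phi_le_exp α γ a n x
    _ = Real.exp (logit (lamn a n)) * Real.exp (-Real.log (Real.sqrt (1 + α / γ))) *
        Real.exp (α / 2 * x ^ 2) := by
        unfold logitPhi
        rw [← Real.exp_add, ← Real.exp_add]
        ring_nf
    _ ≤ (2 * lamn a n) * 1 * Real.exp (α / 2 * x ^ 2) := by
        have e1 : Real.exp (logit (lamn a n)) ≤ 2 * lamn a n := by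
          unfold logit
          rw [Real.exp_log (div_pos hlam_pos (by linarith))]
          rw [div_le_iff₀ (by linarith : (0:ℝ) < 1 - lamn a n)]
          nlinarith
        have e2 : Real.exp (-Real.log (Real.sqrt (1 + α / γ))) ≤ 1 := by
          rw [Real.exp_neg, Real.exp_log hz0]
          exact inv_le_one_of_one_le₀ hz1
        have h3 := Real.exp_pos (α / 2 * x ^ 2)
        have h5 := Real.exp_pos (-Real.log (Real.sqrt (1 + α / γ)))
        have key := mul_le_mul_of_nonneg_right
          (mul_le_mul e1 e2 h5.le (by linarith : (0:ℝ) ≤ 2 * lamn a n)) h3.le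
        linarith
    _ = 2 * lamn a n * Real.exp (α / 2 * x ^ 2) := by ring

lemma continuous_phi (α γ a : ℝ) (n : ℕ) : Continuous (phi α γ a n) := by
  unfold phi logitPhi
  apply continuous_const.div
  · continuity
  · intro x
    positivity

lemma integrable_phi (α γ a : ℝ) (n : ℕ) (m : Measure ℝ) [IsProbabilityMeasure m] :
    Integrable (phi α γ a n) m := by
  refine (integrable_const (1 : ℝ)).mono'
    (continuous_phi α γ a n).aestronglyMeasurable (ae_of_all _ fun x => ?_)
  rw [Real.norm_eq_abs, abs_of_nonneg (phi_pos α γ a n x).le]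
  exact phi_le_one α γ a n x

/-- Integrability of `exp (α/2 x²)` under the standard Gaussian, for `α < 1`. -/
lemma integrable_g {α : ℝ} (hα : α < 1) :
    Integrable (fun x => Real.exp (α / 2 * x ^ 2)) (gaussianReal 0 1) := by
  rw [gaussianReal_of_var_ne_zero _ one_ne_zero]
  rw [integrable_withDensity_iff (measurable_gaussianPDF _ _)
    (ae_of_all _ fun x => ENNReal.ofReal_lt_top)]
  have heq : (fun x => Real.exp (α / 2 * x ^ 2) * (gaussianPDF 0 1 x).toReal) =
      fun x => (Real.sqrt (2 * π))⁻¹ * Real.exp (-((1 - α) / 2) * x ^ 2) := by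
    funext x
    rw [gaussianPDF, ENNReal.toReal_ofReal (gaussianPDFReal_nonneg _ _ _), gaussianPDFReal]
    push_cast
    rw [mul_one, mul_comm (Real.exp _), mul_assoc, ← Real.exp_add]
    ring_nf
  rw [heq]
  exact (integrable_exp_neg_mul_sq (by linarith : (0:ℝ) < (1 - α) / 2)).const_mul _

/-- Integral of a single-coordinate function against a product of probability measures. -/
lemma integral_eval_pi {n : ℕ} (μ : Fin n → Measure ℝ) [∀ i, IsProbabilityMeasure (μ i)]
    (i : Fin n) (f : ℝ → ℝ) :
    ∫ y, f (y i) ∂Measure.pi μ = ∫ x, f x ∂μ i := by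
  have key : ∫ y, (∏ j, if j = i then f (y j) else 1) ∂Measure.pi μ =
      ∏ j, ∫ x, (if j = i then f x else 1) ∂μ j :=
    MeasureTheory.integral_fin_nat_prod_eq_prod (μ := μ)
      (fun j x => if j = i then f x else 1)
  have h1 : ∀ y : Fin n → ℝ, (∏ j, if j = i then f (y j) else 1) = f (y i) := by
    intro y
    rw [Finset.prod_ite_eq' Finset.univ i (fun j => f (y j))]
    simp
  have h2 : ∀ j : Fin n, (∫ x, (if j = i then f x else 1) ∂μ j) =
      if j = i then ∫ x, f x ∂μ i else 1 := by
    intro j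
    split_ifs with h
    · subst h; rfl
    · simp
  simp only [h1] at key
  rw [key, Finset.prod_congr rfl (fun j _ => h2 j),
    Finset.prod_ite_eq' Finset.univ i (fun _ => ∫ x, f x ∂μ i)]
  simp

/-- Integrability of a single-coordinate function against a product of probability measures. -/
lemma integrable_eval_pi {n : ℕ} (μ : Fin n → Measure ℝ) [∀ i, IsProbabilityMeasure (μ i)]
    (i : Fin n) (f : ℝ → ℝ) (hf : Integrable f (μ i)) :
    Integrable (fun y => f (y i)) (Measure.pi μ) := by
  have key : Integrable (fun y : Fin n → ℝ => ∏ j, if j = i then f (y j) else 1)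
      (Measure.pi μ) := by
    refine MeasureTheory.Integrable.fin_nat_prod (μ := μ)
      (f := fun j x => if j = i then f x else 1) (fun j => ?_)
    by_cases h : j = i
    · subst h; simpa using hf
    · simp only [h, if_false]
      exact (integrable_const (1 : ℝ) : Integrable (fun _ : ℝ => (1 : ℝ)) (μ j))
  have h1 : (fun y : Fin n → ℝ => ∏ j, if j = i then f (y j) else 1) =
      fun y => f (y i) := by
    funext y
    rw [Finset.prod_ite_eq' Finset.univ i (fun j => f (y j))]
    simp
  rwa [h1] at key

/-- Weierstrass product inequality. -/
lemma weierstrass {ι : Type*} (u : Finset ι) (φ : ι → ℝ) (h0 : ∀ i, 0 ≤ φ i)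
    (h1 : ∀ i, φ i ≤ 1) :
    1 - ∑ i ∈ u, φ i ≤ ∏ i ∈ u, (1 - φ i) := by
  classical
  induction u using Finset.induction_on with
  | empty => simp
  | insert b u' ha ih =>
    rw [Finset.sum_insert ha, Finset.prod_insert ha]
    have hs : 0 ≤ ∑ i ∈ u', φ i := Finset.sum_nonneg fun i _ => h0 i
    have hp : 0 ≤ ∏ i ∈ u', (1 - φ i) :=
      Finset.prod_nonneg fun i _ => by linarith [h1 i]
    nlinarith [h0 b, h1 b]

/-- Union bound: the variational mass on strict supersets of `s` is at most
the sum of inclusion probabilities outside of `s`. -/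
lemma sum_ssubset_le {n : ℕ} (s : Finset (Fin n)) (φ : Fin n → ℝ)
    (h0 : ∀ i, 0 ≤ φ i) (h1 : ∀ i, φ i ≤ 1) :
    ∑ S ∈ Finset.univ.filter (fun S : Finset (Fin n) => s ⊂ S),
        ((∏ i ∈ S, φ i) * ∏ i ∈ Sᶜ, (1 - φ i)) ≤ ∑ i ∈ sᶜ, φ i := by
  classical
  set ψ : Fin n → ℝ := fun i => 1 - φ i with hψdef
  have hψ : ∀ i, 0 ≤ ψ i := fun i => by simp [hψdef]; linarith [h1 i]
  have hterm : ∀ S : Finset (Fin n), 0 ≤ (∏ i ∈ S, φ i) * ∏ i ∈ Sᶜ, ψ i := fun S =>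
    mul_nonneg (Finset.prod_nonneg fun i _ => h0 i) (Finset.prod_nonneg fun i _ => hψ i)
  -- total mass is 1
  have htot : ∑ S ∈ (Finset.univ : Finset (Finset (Fin n))),
      ((∏ i ∈ S, φ i) * ∏ i ∈ Sᶜ, ψ i) = 1 := by
    rw [← Finset.powerset_univ]
    calc ∑ S ∈ Finset.univ.powerset, ((∏ i ∈ S, φ i) * ∏ i ∈ Sᶜ, ψ i)
        = ∑ S ∈ Finset.univ.powerset, ((∏ i ∈ S, φ i) * ∏ i ∈ Finset.univ \ S, ψ i) :=
          Finset.sum_congr rfl fun S _ => by rw [← Finset.compl_eq_univ_sdiff]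
      _ = ∏ i, (φ i + ψ i) := (Finset.prod_add φ ψ Finset.univ).symm
      _ = ∏ _i : Fin n, (1 : ℝ) :=
          Finset.prod_congr rfl fun i _ => by simp only [hψdef]; ring
      _ = 1 := Finset.prod_const_one
  -- mass on subsets of s
  have hsub : ∑ S ∈ Finset.univ.filter (fun S : Finset (Fin n) => S ⊆ s),
      ((∏ i ∈ S, φ i) * ∏ i ∈ Sᶜ, ψ i) = ∏ i ∈ sᶜ, ψ i := by
    have hfil : Finset.univ.filter (fun S : Finset (Fin n) => S ⊆ s) = s.powerset := by
      ext t
      simp [Finset.mem_powerset]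
    rw [hfil]
    have hsplit : ∀ t ∈ s.powerset,
        (∏ i ∈ t, φ i) * ∏ i ∈ tᶜ, ψ i =
          ((∏ i ∈ t, φ i) * ∏ i ∈ s \ t, ψ i) * ∏ i ∈ sᶜ, ψ i := by
      intro t ht
      rw [Finset.mem_powerset] at ht
      have hdisj : Disjoint (s \ t) sᶜ :=
        Disjoint.mono_left Finset.sdiff_subset disjoint_compl_right
      have hunion : (s \ t) ∪ sᶜ = tᶜ := by
        ext x
        simp only [Finset.mem_union, Finset.mem_sdiff, Finset.mem_compl]
        constructor
        · rintro (⟨_, hx⟩ | hx)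
          · exact hx
          · exact fun hxt => hx (ht hxt)
        · intro hx
          by_cases hxs : x ∈ s
          · exact Or.inl ⟨hxs, hx⟩
          · exact Or.inr hxs
      rw [← hunion, Finset.prod_union hdisj]
      ring
    rw [Finset.sum_congr rfl hsplit, ← Finset.sum_mul, ← Finset.prod_add φ ψ s]
    rw [Finset.prod_congr rfl
      (fun i _ => show φ i + ψ i = 1 from by simp only [hψdef]; ring)]
    rw [Finset.prod_const_one, one_mul]
  -- the strict-superset sum is bounded by the non-subset sum
  have hmono : ∑ S ∈ Finset.univ.filter (fun S : Finset (Fin n) => s ⊂ S),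
      ((∏ i ∈ S, φ i) * ∏ i ∈ Sᶜ, ψ i) ≤
      ∑ S ∈ Finset.univ.filter (fun S : Finset (Fin n) => ¬ S ⊆ s),
        ((∏ i ∈ S, φ i) * ∏ i ∈ Sᶜ, ψ i) := by
    apply Finset.sum_le_sum_of_subset_of_nonneg
    · exact Finset.monotone_filter_right _ fun S _ hS => hS.not_subset
    · intro S _ _
      exact hterm S
  have hsplit2 := Finset.sum_filter_add_sum_filter_not (Finset.univ : Finset (Finset (Fin n)))
    (fun S => S ⊆ s) (fun S => (∏ i ∈ S, φ i) * ∏ i ∈ Sᶜ, ψ i)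
  have hW : 1 - ∏ i ∈ sᶜ, ψ i ≤ ∑ i ∈ sᶜ, φ i := by
    have := weierstrass sᶜ φ h0 h1
    simp only [hψdef]
    linarith
  calc ∑ S ∈ Finset.univ.filter (fun S : Finset (Fin n) => s ⊂ S),
      ((∏ i ∈ S, φ i) * ∏ i ∈ Sᶜ, ψ i) ≤ _ := hmono
    _ = 1 - ∏ i ∈ sᶜ, ψ i := by
        rw [eq_sub_iff_add_eq, ← hsub]
        rw [add_comm]
        rw [hsplit2, htot]
    _ ≤ ∑ i ∈ sᶜ, φ i := hW

/-- **Theorem 5, part 1** (no overshooting of the true configuration).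
For any sequence of true vectors `β*` with `|S_{β*}| = o(n)`, the variational
approximation satisfies `E_{β*} q^n({S : S ⊋ S*}) → 0`. -/
theorem no_overshoot
    (α γ a : ℝ) (hα : α ∈ Set.Ioo (0 : ℝ) 1) (hγ : 0 < γ) (ha : 0 < a)
    (β : ∀ n : ℕ, Fin n → ℝ)
    (hβ : (fun n => ((config (β n)).card : ℝ)) =o[atTop] fun n => (n : ℝ)) :
    Tendsto (fun n =>
        ∫ y, (∑ S ∈ Finset.univ.filter (fun S : Finset (Fin n) => config (β n) ⊂ S),
            qS α γ a n y S) ∂ Pd (β n))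
      atTop (𝓝 0) := by
  obtain ⟨hα0, hα1⟩ := hα
  set g : ℝ → ℝ := fun x => Real.exp (α / 2 * x ^ 2) with hg
  have hg_int : Integrable g (gaussianReal 0 1) := integrable_g hα1
  set C : ℝ := ∫ x, g x ∂gaussianReal 0 1 with hCdef
  have hC0 : 0 ≤ C := integral_nonneg fun x => (Real.exp_pos _).le
  set F : ℕ → ℝ := fun n =>
    ∫ y, (∑ S ∈ Finset.univ.filter (fun S : Finset (Fin n) => config (β n) ⊂ S),
        qS α γ a n y S) ∂ Pd (β n) with hF
  have hF_nonneg : ∀ n, 0 ≤ F n := by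
    intro n
    apply integral_nonneg
    intro y
    apply Finset.sum_nonneg
    intro S _
    exact mul_nonneg (Finset.prod_nonneg fun i _ => (phi_pos α γ a n (y i)).le)
      (Finset.prod_nonneg fun i _ => by linarith [phi_le_one α γ a n (y i)])
  have hF_le : ∀ n, 2 ≤ n → F n ≤ 2 * C * (n : ℝ) ^ (-a) := by
    intro n hn
    set s : Finset (Fin n) := config (β n) with hs
    have hn0 : (0 : ℝ) < (n : ℝ) := by positivity
    -- the integrand is dominated by the sum of inclusion probabilities outside s
    have hptwise : ∀ y : Fin n → ℝ,
        (∑ S ∈ Finset.univ.filter (fun S : Finset (Fin n) => s ⊂ S), qS α γ a n y S) ≤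
          ∑ i ∈ sᶜ, phi α γ a n (y i) := by
      intro y
      exact sum_ssubset_le s (fun i => phi α γ a n (y i))
        (fun i => (phi_pos α γ a n (y i)).le) (fun i => phi_le_one α γ a n (y i))
    have hG_int : Integrable (fun y : Fin n → ℝ => ∑ i ∈ sᶜ, phi α γ a n (y i))
        (Pd (β n)) := by
      apply integrable_finset_sum
      intro i _
      exact integrable_eval_pi _ i _ (integrable_phi α γ a n _)
    have step1 : F n ≤ ∫ y, (∑ i ∈ sᶜ, phi α γ a n (y i)) ∂ Pd (β n) := by
      apply integral_mono_of_nonneg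
      · exact ae_of_all _ fun y => Finset.sum_nonneg fun S _ =>
          mul_nonneg (Finset.prod_nonneg fun i _ => (phi_pos α γ a n (y i)).le)
            (Finset.prod_nonneg fun i _ => by linarith [phi_le_one α γ a n (y i)])
      · exact hG_int
      · exact ae_of_all _ hptwise
    have step2 : ∫ y, (∑ i ∈ sᶜ, phi α γ a n (y i)) ∂ Pd (β n) =
        ∑ i ∈ sᶜ, ∫ x, phi α γ a n x ∂gaussianReal (β n i) 1 := by
      unfold Pd
      rw [integral_finset_sum _ fun i _ => integrable_eval_pi _ i _ (integrable_phi α γ a n _)]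
      exact Finset.sum_congr rfl fun i _ => integral_eval_pi _ i _
    have hβ0 : ∀ i ∈ sᶜ, β n i = 0 := by
      intro i hi
      rw [Finset.mem_compl] at hi
      by_contra h
      exact hi (by simp [hs, config, h])
    have step3 : ∀ i ∈ sᶜ, ∫ x, phi α γ a n x ∂gaussianReal (β n i) 1 ≤
        2 * lamn a n * C := by
      intro i hi
      rw [hβ0 i hi]
      have : ∫ x, phi α γ a n x ∂gaussianReal 0 1 ≤
          ∫ x, 2 * lamn a n * g x ∂gaussianReal 0 1 := by
        apply integral_mono (integrable_phi α γ a n _) (hg_int.const_mul _)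
        intro x
        exact phi_le_bound hα0 hγ ha hn x
      rwa [integral_const_mul, ← hCdef] at this
    have hlam_pos : 0 < lamn a n := Real.rpow_pos_of_pos hn0 _
    have step4 : ∑ i ∈ sᶜ, ∫ x, phi α γ a n x ∂gaussianReal (β n i) 1 ≤
        (n : ℝ) * (2 * lamn a n * C) := by
      calc ∑ i ∈ sᶜ, ∫ x, phi α γ a n x ∂gaussianReal (β n i) 1 ≤
          ∑ _i ∈ sᶜ, 2 * lamn a n * C := Finset.sum_le_sum step3
        _ = (sᶜ.card : ℝ) * (2 * lamn a n * C) := by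
            rw [Finset.sum_const, nsmul_eq_mul]
        _ ≤ (n : ℝ) * (2 * lamn a n * C) := by
            apply mul_le_mul_of_nonneg_right _ (by positivity)
            have hcard : sᶜ.card ≤ n := by simpa using Finset.card_le_univ sᶜ
            exact_mod_cast hcard
    have hrpow : (n : ℝ) * lamn a n = (n : ℝ) ^ (-a) := by
      unfold lamn
      rw [show -a = 1 + -(a + 1) by ring, Real.rpow_add hn0, Real.rpow_one]
    calc F n ≤ _ := step1
      _ = _ := step2
      _ ≤ (n : ℝ) * (2 * lamn a n * C) := step4
      _ = 2 * C * ((n : ℝ) * lamn a n) := by ring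
      _ = 2 * C * (n : ℝ) ^ (-a) := by rw [hrpow]
  have hlim : Tendsto (fun n : ℕ => 2 * C * (n : ℝ) ^ (-a)) atTop (𝓝 0) := by
    have h1 : Tendsto (fun n : ℕ => ((n : ℝ)) ^ (-a)) atTop (𝓝 0) :=
      (tendsto_rpow_neg_atTop ha).comp tendsto_natCast_atTop_atTop
    have := h1.const_mul (2 * C)
    simpa using this
  exact squeeze_zero' (Eventually.of_forall hF_nonneg)
    (eventually_atTop.mpr ⟨2, hF_le⟩) hlim

end VB
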